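/- The function p ↦ ∫₀¹ p^α μ(α) dα (with p^α the principal branch of the complex power) is analytic on ℂ \ (-∞, 0] and does not vanish there; consequently F(p) := 1 / ∫₀¹ p^α μ(α) dα is analytic on ℂ \ (-∞, 0]. -/

import Mathlib

open MeasureTheory Real Set

private lemma rpow_le_max' {r : ℝ} (hr : 0 ≤ r) {a : ℝ} (h0 : 0 ≤ a) (h1 : a ≤ 1) :
    r ^ a ≤ max 1 r := by
  rcases le_total r 1 with h | h
  · exact le_max_of_le_left (Real.rpow_le_one hr h h0)
  · calc r ^ a ≤ r ^ (1:ℝ) := Real.rpow_le_rpow_of_exponent_le h h1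
    _ = r := Real.rpow_one r
    _ ≤ max 1 r := le_max_right _ _

private lemma min_le_rpow' {r : ℝ} (hr : 0 < r) {a : ℝ} (h0 : 0 ≤ a) (h1 : a ≤ 1) :
    min 1 r ≤ r ^ a := by
  rcases le_total r 1 with h | h
  · calc min 1 r ≤ r := min_le_right _ _
    _ = r ^ (1:ℝ) := (Real.rpow_one r).symm
    _ ≤ r ^ a := Real.rpow_le_rpow_of_exponent_ge hr h h1
  · exact le_trans (min_le_left _ _) (Real.one_le_rpow h h0)

private lemma integrable_aux (μ : ℝ → ℝ) (hμ_int : IntegrableOn μ (Ioo 0 1)) {p : ℂ}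
    (hp : p ≠ 0) :
    IntegrableOn (fun α : ℝ => p ^ (α : ℂ) * (μ α : ℂ)) (Ioo 0 1) := by
  have hcont : Continuous fun α : ℝ => p ^ (α : ℂ) := by
    have h : (fun α : ℝ => p ^ (α : ℂ)) = fun α : ℝ => Complex.exp (Complex.log p * α) := by
      funext α; exact Complex.cpow_def_of_ne_zero hp _
    rw [h]
    exact Complex.continuous_exp.comp (continuous_const.mul Complex.continuous_ofReal)
  have hmeas : AEStronglyMeasurable (fun α : ℝ => p ^ (α : ℂ) * (μ α : ℂ))
      (volume.restrict (Ioo 0 1)) :=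
    hcont.aestronglyMeasurable.mul
      (Complex.continuous_ofReal.comp_aestronglyMeasurable hμ_int.aestronglyMeasurable)
  refine Integrable.mono' ((hμ_int.norm).const_mul (max 1 (‖p‖))) hmeas ?_
  filter_upwards [ae_restrict_mem measurableSet_Ioo] with α hα
  have h1 : ‖p ^ (α : ℂ)‖ = ‖p‖ ^ α := by
    rw [Complex.norm_cpow_of_ne_zero hp]
    simp
  rw [norm_mul, h1, Complex.norm_real]
  exact mul_le_mul_of_nonneg_right
    (rpow_le_max' (norm_nonneg p) hα.1.le hα.2.le) (abs_nonneg _)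

/-- The function `p ↦ ∫₀¹ p^α μ(α) dα` (principal branch of the complex power)
is analytic on `ℂ \ (-∞, 0]` and does not vanish there; consequently
`F(p) := 1 / ∫₀¹ p^α μ(α) dα` is analytic on `ℂ \ (-∞, 0]`. -/
theorem stmt_3 (μ : ℝ → ℝ)
    (hμ_int : IntegrableOn μ (Ioo 0 1))
    (hμ_nonneg : ∀ α ∈ Ioo (0:ℝ) 1, 0 ≤ μ α)
    (hμ_ne : ¬ (∀ᵐ α ∂(volume.restrict (Ioo (0:ℝ) 1)), μ α = 0)) :
    AnalyticOnNhd ℂ (fun p : ℂ => ∫ α in Ioo (0:ℝ) 1, p ^ (α : ℂ) * (μ α : ℂ))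
      Complex.slitPlane ∧
    (∀ p ∈ Complex.slitPlane, (∫ α in Ioo (0:ℝ) 1, p ^ (α : ℂ) * (μ α : ℂ)) ≠ 0) ∧
    AnalyticOnNhd ℂ (fun p : ℂ => 1 / ∫ α in Ioo (0:ℝ) 1, p ^ (α : ℂ) * (μ α : ℂ))
      Complex.slitPlane := by
  have hAnal : AnalyticOnNhd ℂ (fun p : ℂ => ∫ α in Ioo (0:ℝ) 1, p ^ (α : ℂ) * (μ α : ℂ))
      Complex.slitPlane := by
    refine DifferentiableOn.analyticOnNhd ?_ Complex.isOpen_slitPlane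
    intro p hp
    obtain ⟨ε, hε, hball⟩ := Metric.isOpen_iff.mp Complex.isOpen_slitPlane p hp
    have hp0 : p ≠ 0 := Complex.slitPlane_ne_zero hp
    have hεp : ε ≤ ‖p‖ := by
      by_contra h
      push_neg at h
      have h0 : (0:ℂ) ∈ Metric.ball p ε := by
        simpa [Metric.mem_ball, dist_eq_norm] using h
      exact Complex.slitPlane_ne_zero (hball h0) rfl
    set r : ℝ := ε / 2 with hr
    have hr0 : 0 < r := by positivity
    have hq_lb : ∀ q ∈ Metric.ball p r, r ≤ ‖q‖ := by
      intro q hq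
      have hd : ‖p - q‖ < r := by
        rw [Metric.mem_ball, dist_eq_norm] at hq
        rwa [← norm_neg, neg_sub]
      have h2 : ‖p‖ - ‖q‖ ≤ ‖p - q‖ := by
        simpa using norm_sub_norm_le p q
      have : ε - r ≤ ‖q‖ := by linarith
      have hεr : ε - r = r := by rw [hr]; ring
      linarith
    have hq_ub : ∀ q ∈ Metric.ball p r, ‖q‖ ≤ ‖p‖ + r := by
      intro q hq
      rw [Metric.mem_ball, dist_eq_norm] at hq
      have h2 : ‖q‖ - ‖p‖ ≤ ‖q - p‖ := by
        simpa using norm_sub_norm_le q p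
      linarith
    have hball' : Metric.ball p r ⊆ Complex.slitPlane := fun q hq =>
      hball (Metric.ball_subset_ball (by rw [hr]; linarith) hq)
    have key := hasDerivAt_integral_of_dominated_loc_of_deriv_le
      (μ := volume.restrict (Ioo (0:ℝ) 1)) (x₀ := p) (s := Metric.ball p r)
      (F := fun q α => q ^ (α : ℂ) * (μ α : ℂ))
      (F' := fun q α => ((α : ℂ) * q ^ ((α : ℂ) - 1)) * (μ α : ℂ))
      (bound := fun α => (max 1 (‖p‖ + r) / r) * |μ α|)
      (Metric.ball_mem_nhds p hr0) ?_ (integrable_aux μ hμ_int hp0) ?_ ?_ ?_ ?_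
    · exact key.2.differentiableAt.differentiableWithinAt
    · filter_upwards [Metric.ball_mem_nhds p hr0] with q hq
      exact (integrable_aux μ hμ_int (Complex.slitPlane_ne_zero (hball' hq))).aestronglyMeasurable
    · have hcont : Continuous fun α : ℝ => (α : ℂ) * p ^ ((α : ℂ) - 1) := by
        have h : (fun α : ℝ => p ^ ((α : ℂ) - 1)) =
            fun α : ℝ => Complex.exp (Complex.log p * ((α : ℂ) - 1)) := by
          funext α; exact Complex.cpow_def_of_ne_zero hp0 _
        refine Complex.continuous_ofReal.mul ?_
        rw [h]
        exact Complex.continuous_exp.comp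
          (continuous_const.mul (Complex.continuous_ofReal.sub continuous_const))
      exact hcont.aestronglyMeasurable.mul
        (Complex.continuous_ofReal.comp_aestronglyMeasurable hμ_int.aestronglyMeasurable)
    · filter_upwards [ae_restrict_mem measurableSet_Ioo] with α hα q hq
      have hqpos : 0 < ‖q‖ := lt_of_lt_of_le hr0 (hq_lb q hq)
      have hq0' : q ≠ 0 := by
        intro h; rw [h] at hqpos; simp at hqpos
      have habs : ‖q ^ ((α : ℂ) - 1)‖ = ‖q‖ ^ (α - 1) := by
        rw [Complex.norm_cpow_of_ne_zero hq0']
        simp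
      have h3 : ‖q‖ ^ (α - 1) ≤ max 1 (‖p‖ + r) / r := by
        rw [Real.rpow_sub hqpos, Real.rpow_one]
        refine div_le_div₀ (by positivity) ?_ hr0 (hq_lb q hq)
        exact le_trans (rpow_le_max' (norm_nonneg q) hα.1.le hα.2.le)
          (max_le_max le_rfl (hq_ub q hq))
      have hα1 : |α| ≤ 1 := by
        rw [abs_of_pos hα.1]; exact hα.2.le
      calc ‖((α : ℂ) * q ^ ((α : ℂ) - 1)) * (μ α : ℂ)‖
          = |α| * (‖q‖ ^ (α - 1)) * |μ α| := by
            simp only [norm_mul, habs, Complex.norm_real, Real.norm_eq_abs]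
        _ ≤ 1 * (max 1 (‖p‖ + r) / r) * |μ α| := by
            exact mul_le_mul (mul_le_mul hα1 h3 (by positivity) zero_le_one)
              le_rfl (abs_nonneg _) (by positivity)
        _ = (max 1 (‖p‖ + r) / r) * |μ α| := by ring
    · exact hμ_int.norm.const_mul _
    · refine Filter.Eventually.of_forall fun α q hq => ?_
      exact ((Complex.hasStrictDerivAt_cpow_const (hball' hq)).hasDerivAt).mul_const _
  have hne : ∀ p ∈ Complex.slitPlane,
      (∫ α in Ioo (0:ℝ) 1, p ^ (α : ℂ) * (μ α : ℂ)) ≠ 0 := by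
    intro p hp
    have hp0 : p ≠ 0 := Complex.slitPlane_ne_zero hp
    set θ : ℝ := p.arg with hθ
    have hθπ : |θ| < π := by
      rw [abs_lt]
      exact ⟨Complex.neg_pi_lt_arg p,
        lt_of_le_of_ne (Complex.arg_le_pi p) (Complex.mem_slitPlane_iff_arg.mp hp).1⟩
    set e : ℂ := Complex.exp ((-(θ/2) : ℝ) * Complex.I) with he
    have hcos : 0 < Real.cos (|θ|/2) := by
      apply Real.cos_pos_of_mem_Ioo
      constructor
      · have := Real.pi_pos; have := abs_nonneg θ; linarith
      · linarith
    set c : ℝ := min 1 (‖p‖) * Real.cos (|θ|/2) with hc_def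
    have hc : 0 < c := mul_pos (lt_min one_pos (norm_pos_iff.mpr hp0)) hcos
    have hkey : ∀ α ∈ Ioo (0:ℝ) 1, c * μ α ≤ (e * (p ^ (α : ℂ) * (μ α : ℂ))).re := by
      intro α hα
      have hre : (e * (p ^ (α : ℂ) * (μ α : ℂ))).re
          = Real.exp (Real.log (‖p‖) * α) * Real.cos (θ * α - θ/2) * μ α := by
        have hlog : Complex.log p = (Real.log (‖p‖) : ℂ) + (θ : ℂ) * Complex.I :=
          Complex.ext (by simp [Complex.log_re]) (by simp [Complex.log_im, hθ])
        have hmul : e * (p ^ (α : ℂ) * (μ α : ℂ)) =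
            Complex.exp ((Real.log (‖p‖) * α : ℝ) +
              ((θ * α - θ/2 : ℝ) : ℂ) * Complex.I) * (μ α : ℂ) := by
          rw [Complex.cpow_def_of_ne_zero hp0, hlog, ← mul_assoc, ← Complex.exp_add]
          congr 1
          push_cast
          ring
        rw [hmul]
        simp [Complex.exp_re, Complex.mul_re, Complex.mul_im, Complex.add_re, Complex.add_im]
      rw [hre]
      have h1 : min 1 (‖p‖) ≤ Real.exp (Real.log (‖p‖) * α) := by
        rw [← Real.rpow_def_of_pos (norm_pos_iff.mpr hp0)]
        exact min_le_rpow' (norm_pos_iff.mpr hp0) hα.1.le hα.2.le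
      have h2 : Real.cos (|θ|/2) ≤ Real.cos (θ * α - θ/2) := by
        rw [← Real.cos_abs (θ * α - θ/2)]
        apply Real.cos_le_cos_of_nonneg_of_le_pi (abs_nonneg _) (by linarith [Real.pi_pos])
        have habs2 : |θ * α - θ / 2| = |θ| * |α - 1/2| := by
          rw [← abs_mul]; ring_nf
        rw [habs2]
        have hhalf : |α - 1/2| ≤ 1/2 := by
          rw [abs_le]; constructor <;> [linarith [hα.1]; linarith [hα.2]]
        calc |θ| * |α - 1/2| ≤ |θ| * (1/2) :=
              mul_le_mul_of_nonneg_left hhalf (abs_nonneg θ)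
          _ = |θ| / 2 := by ring
      refine mul_le_mul_of_nonneg_right ?_ (hμ_nonneg α hα)
      exact mul_le_mul h1 h2 hcos.le (Real.exp_pos _).le
    have hint := integrable_aux μ hμ_int hp0
    have hμpos : 0 < ∫ α in Ioo (0:ℝ) 1, μ α := by
      rcases (setIntegral_nonneg measurableSet_Ioo hμ_nonneg).lt_or_eq with h | h
      · exact h
      · exfalso
        apply hμ_ne
        have hae : 0 ≤ᶠ[ae (volume.restrict (Ioo (0:ℝ) 1))] μ := by
          filter_upwards [ae_restrict_mem measurableSet_Ioo] with α hα
          exact hμ_nonneg α hα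
        have := (integral_eq_zero_iff_of_nonneg_ae hae hμ_int).mp h.symm
        filter_upwards [this] with α hα using hα
    have hre_eq : ∫ α in Ioo (0:ℝ) 1, (e * (p ^ (α : ℂ) * (μ α : ℂ))).re
        = (e * ∫ α in Ioo (0:ℝ) 1, p ^ (α : ℂ) * (μ α : ℂ)).re := by
      rw [← integral_const_mul]
      exact integral_re (hint.const_mul e)
    have hpos : 0 < (e * ∫ α in Ioo (0:ℝ) 1, p ^ (α : ℂ) * (μ α : ℂ)).re := by
      rw [← hre_eq]
      calc (0:ℝ) < c * ∫ α in Ioo (0:ℝ) 1, μ α := mul_pos hc hμpos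
        _ = ∫ α in Ioo (0:ℝ) 1, c * μ α := (integral_const_mul c _).symm
        _ ≤ ∫ α in Ioo (0:ℝ) 1, (e * (p ^ (α : ℂ) * (μ α : ℂ))).re := by
            refine setIntegral_mono_on (hμ_int.const_mul c) ?_ measurableSet_Ioo hkey
            exact (hint.const_mul e).re
    intro h0
    rw [h0, mul_zero] at hpos
    simp at hpos
  refine ⟨hAnal, hne, ?_⟩
  exact analyticOnNhd_const.div hAnal hne
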